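/- Define S-linear maps ∂ : F_d → F_{d-1} (d ≥ 1) by ∂[{i}|{j}] = x_i x_j and, for d ≥ 2, ∂[σ|τ] = x_{max τ}[σ|τ∖{max τ}] − (−1)^{|τ|+|σ|} x_{min σ}[σ∖{min σ}|τ], where any symbol not lying in B_{d-1} is interpreted as 0. Then for all basis elements [σ₁|τ₁] ∈ B_p and [σ₂|τ₂] ∈ B_q (p,q ≥ 1), c((d[σ₁|τ₁]) ⋆ [σ₂|τ₂]) = c((∂[σ₁|τ₁]) ⋆ [σ₂|τ₂]). -/

import Mathlib

open Classical MvPolynomial Finsupp TensorProduct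

set_option maxHeartbeats 1600000

noncomputable section

namespace EdgeRes

/-- A "cell" `(σ, τ)`: a pair of finite sets of vertices, representing the symbol `[σ|τ]`. -/
abbrev Cell (n : ℕ) := Finset (Fin n) × Finset (Fin n)

/-- The cointerval graph of the intervals `[a i, b i]`: distinct vertices are adjacent
iff the corresponding closed intervals are disjoint. -/
def cigraph (n : ℕ) (a b : Fin n → ℝ) : SimpleGraph (Fin n) where
  Adj i j := i ≠ j ∧ Disjoint (Set.Icc (a i) (b i)) (Set.Icc (a j) (b j))
  symm := by constructor; intro i j h; exact ⟨h.1.symm, h.2.symm⟩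
  loopless := by constructor; intro i h; exact h.1 rfl

variable {n : ℕ}

/-- The homological degree of a cell: `|σ| + |τ| - 1`. -/
def cellDeg (e : Cell n) : ℕ := e.1.card + e.2.card - 1

/-- `e = (σ, τ)` is a basis cell: either the degree-0 cell `(∅, ∅)` (representing `1 ∈ B₀`),
or `σ, τ` are disjoint and nonempty, `max σ < min τ`, and every `i ∈ σ` is adjacent
to `min τ` in `G`. -/
def IsBasisCell (G : SimpleGraph (Fin n)) (e : Cell n) : Prop :=
  e = (∅, ∅) ∨
  (e.1.Nonempty ∧ e.2.Nonempty ∧ Disjoint e.1 e.2 ∧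
   (∀ i ∈ e.1, ∀ j ∈ e.2, i < j) ∧
   (∀ i ∈ e.1, ∀ j ∈ e.2, (∀ j' ∈ e.2, j ≤ j') → G.Adj i j))

/-- `e ∈ B_d`. -/
def InB (G : SimpleGraph (Fin n)) (d : ℕ) (e : Cell n) : Prop :=
  IsBasisCell G e ∧ cellDeg e = d

/-- The underlying module of the resolution: the free `S`-module on all cells (the
resolution `F` is the submodule family spanned by the basis cells of each degree). -/
abbrev Ftot (n : ℕ) (k : Type) [Field k] := Cell n →₀ MvPolynomial (Fin n) k

variable (G : SimpleGraph (Fin n)) (k : Type) [Field k]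

/-- The basis vector corresponding to a cell, where symbols that are not genuine
basis elements are interpreted as `0`. -/
def sym (e : Cell n) : Ftot n k :=
  if IsBasisCell G e then Finsupp.single e 1 else 0

/-- The differential on a basis cell: `d[{i}|{j}] = x_i x_j`, and for `|σ|+|τ| ≥ 3`,
`d[σ|τ] = Σ_{i∈σ} (−1)^{|τ|+|{j∈σ : j>i}|} x_i [σ∖i|τ] + Σ_{i∈τ} (−1)^{|{j∈τ : j>i}|} x_i [σ|τ∖i]`. -/
def diffCell (e : Cell n) : Ftot n k :=
  if IsBasisCell G e then
    if e.1.card + e.2.card = 2 then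
      (∏ i ∈ e.1 ∪ e.2, (X i : MvPolynomial (Fin n) k)) • sym G k ((∅, ∅) : Cell n)
    else if 3 ≤ e.1.card + e.2.card then
      (∑ i ∈ e.1,
        (((-1 : MvPolynomial (Fin n) k) ^ (e.2.card + (e.1.filter fun j => i < j).card)) * X i) •
          sym G k (e.1.erase i, e.2))
      + (∑ i ∈ e.2,
        (((-1 : MvPolynomial (Fin n) k) ^ ((e.2.filter fun j => i < j).card)) * X i) •
          sym G k (e.1, e.2.erase i))
    else 0
  else 0

/-- The differential, as an `S`-linear endomorphism of the total module (it is zero in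
degree `0` and on non-basis cells). -/
def Dmap : Ftot n k →ₗ[MvPolynomial (Fin n) k] Ftot n k :=
  Finsupp.lsum ℕ fun e => LinearMap.smulRight LinearMap.id (diffCell G k e)

/-- The submodule `F_d`: the span of the basis cells in `B_d`.  (`F` is the direct sum of
these, and `F_0 = S·[∅|∅] ≅ S`.) -/
def Fsub (d : ℕ) : Submodule (MvPolynomial (Fin n) k) (Ftot n k) :=
  Submodule.span _ {f : Ftot n k | ∃ e : Cell n, InB G d e ∧ f = Finsupp.single e 1}

/-- The edge ideal `I_G`, generated by the `x_i x_j` for edges `ij` of `G`. -/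
def edgeIdeal : Ideal (MvPolynomial (Fin n) k) :=
  Ideal.span {m | ∃ i j : Fin n, G.Adj i j ∧ m = X i * X j}

/-- The irrelevant maximal ideal `(x_1, …, x_n)`. -/
def irrIdeal (n : ℕ) (k : Type) [Field k] : Ideal (MvPolynomial (Fin n) k) :=
  Ideal.span (Set.range fun i : Fin n => (X i : MvPolynomial (Fin n) k))

/-- The set of pairs `(i, j)` with `i < j`, `ij ∈ E(G)`, and `x_i x_j ∣ x^α`; i.e. the
elements `[{i}|{j}]` of `B₁` whose monomial divides `x^α`. -/
def DvdSet (α : Fin n →₀ ℕ) : Finset (Fin n × Fin n) :=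
  Finset.univ.filter fun p => p.1 < p.2 ∧ G.Adj p.1 p.2 ∧ 1 ≤ α p.1 ∧ 1 ≤ α p.2

/-- `c` on a monomial `x^α ∈ F_0 = S`: zero if `x^α ∉ I_G`; otherwise
`(x^α/(x_i x_j))·[{i}|{j}]` for the `≺`-minimal `[{i}|{j}] ∈ B₁` with `x_i x_j ∣ x^α`
(i.e. `j` is largest possible and then `i` smallest possible). -/
def cZero (α : Fin n →₀ ℕ) : Ftot n k :=
  if h : (DvdSet G α).Nonempty then
    let t := ((DvdSet G α).image Prod.snd).max' (h.image _)
    if h2 : ((((DvdSet G α).filter fun p => p.2 = t)).image Prod.fst).Nonempty then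
      let s := ((((DvdSet G α).filter fun p => p.2 = t)).image Prod.fst).min' h2
      (monomial (α - Finsupp.single s 1 - Finsupp.single t 1) (1 : k)) • sym G k ({s}, {t})
    else 0
  else 0

/-- `C₁ = {i ∈ supp α : i > max τ}`. -/
def C1set (τ : Finset (Fin n)) (α : Fin n →₀ ℕ) : Finset (Fin n) :=
  α.support.filter fun i => ∀ j ∈ τ, j < i

/-- `C₂ = {i ∈ supp α : i < min σ, {i, min τ} ∈ E(G)}`. -/
def C2set (σ τ : Finset (Fin n)) (α : Fin n →₀ ℕ) : Finset (Fin n) :=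
  α.support.filter fun i =>
    (∀ s ∈ σ, i < s) ∧ ∀ j ∈ τ, (∀ j' ∈ τ, j ≤ j') → G.Adj i j

/-- `C₃ = {i ∈ supp α : i < min σ, i < max supp α, {i, max supp α} ∈ E(G)}`. -/
def C3set (σ : Finset (Fin n)) (α : Fin n →₀ ℕ) : Finset (Fin n) :=
  α.support.filter fun i =>
    (∀ s ∈ σ, i < s) ∧ ∀ m ∈ α.support, (∀ m' ∈ α.support, m' ≤ m) → (i < m ∧ G.Adj i m)

/-- The value of the contracting homotopy `c` on the `k`-basis vector `x^α·e`. -/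
def cMono (e : Cell n) (α : Fin n →₀ ℕ) : Ftot n k :=
  if IsBasisCell G e then
    if hτ : e.2.Nonempty then
      if e.2.card = 1 then
        -- `τ = {t}`
        let t := e.2.max' hτ
        if h1 : (C1set e.2 α).Nonempty then
          let m1 := (C1set e.2 α).max' h1
          (monomial (α - Finsupp.single m1 1) (1 : k)) • sym G k (e.1, insert m1 e.2)
          + (if h3 : (C3set G e.1 α).Nonempty then
              let m3 := (C3set G e.1 α).min' h3
              ((-1 : MvPolynomial (Fin n) k) ^ (e.1.card + 1)) •
                ((monomial (α + Finsupp.single t 1 - Finsupp.single m1 1 - Finsupp.single m3 1)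
                    (1 : k)) • sym G k (insert m3 e.1, ({m1} : Finset (Fin n))))
            else 0)
        else
          if h2 : (C2set G e.1 e.2 α).Nonempty then
            let m2 := (C2set G e.1 e.2 α).min' h2
            ((-1 : MvPolynomial (Fin n) k) ^ (e.1.card + 1)) •
              ((monomial (α - Finsupp.single m2 1) (1 : k)) • sym G k (insert m2 e.1, e.2))
          else 0
      else
        -- `|τ| ≥ 2`
        if h1 : (C1set e.2 α).Nonempty then
          let m1 := (C1set e.2 α).max' h1
          (monomial (α - Finsupp.single m1 1) (1 : k)) • sym G k (e.1, insert m1 e.2)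
        else 0
    else cZero G k α  -- the degree-0 basis cell `(∅, ∅)`
  else 0

/-- The `k`-basis of the total module, indexed by pairs (cell, monomial exponent). -/
def FBasis (n : ℕ) (k : Type) [Field k] :
    Module.Basis ((_ : Cell n) × (Fin n →₀ ℕ)) k (Ftot n k) :=
  Finsupp.basis fun _ => MvPolynomial.basisMonomials (Fin n) k

/-- The contracting homotopy `c`, as a `k`-linear endomorphism of the total module. -/
def Cmap : Ftot n k →ₗ[k] Ftot n k :=
  (FBasis n k).constr ℕ fun p => cMono G k p.1 p.2

/-- The `S`-bilinear extension of a map defined on pairs of cells. -/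
def biext (b : Cell n → Cell n → Ftot n k) (f g : Ftot n k) : Ftot n k :=
  ∑ e₁ ∈ f.support, ∑ e₂ ∈ g.support, (f e₁ * g e₂) • b e₁ e₂

/-- The product of two basis cells, defined recursively (with fuel, which suffices as each
recursive step lowers the total degree): `1 ⋆ 1 = 1`, and for `p + q ≥ 1`,
`e₁ ⋆ e₂ = c((d e₁) ⋆ e₂) + (−1)^p c(e₁ ⋆ (d e₂))`. -/
def bstar : ℕ → Cell n → Cell n → Ftot n k
  | 0, _, _ => 0
  | N + 1, e₁, e₂ =>
    if cellDeg e₁ + cellDeg e₂ = 0 then Finsupp.single ((∅, ∅) : Cell n) 1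
    else
      Cmap G k (biext k (fun a b => bstar N a b) (Dmap G k (Finsupp.single e₁ 1)) (Finsupp.single e₂ 1))
      + ((-1 : MvPolynomial (Fin n) k) ^ cellDeg e₁) •
          Cmap G k (biext k (fun a b => bstar N a b) (Finsupp.single e₁ 1) (Dmap G k (Finsupp.single e₂ 1)))

/-- The product `⋆` on the resolution, extended `S`-bilinearly from basis cells. -/
def pstar (f g : Ftot n k) : Ftot n k := biext k (bstar G k (4 * n + 4)) f g

/-- The map `∂` on a basis cell: `∂[{i}|{j}] = x_i x_j`, and for `|σ|+|τ| ≥ 3`,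
`∂[σ|τ] = x_{max τ}[σ|τ∖max τ] − (−1)^{|τ|+|σ|} x_{min σ}[σ∖min σ|τ]`. -/
def partialCell (e : Cell n) : Ftot n k :=
  if IsBasisCell G e then
    if e.1.card + e.2.card = 2 then
      (∏ i ∈ e.1 ∪ e.2, (X i : MvPolynomial (Fin n) k)) • sym G k ((∅, ∅) : Cell n)
    else if 3 ≤ e.1.card + e.2.card then
      if h1 : e.1.Nonempty then
        if h2 : e.2.Nonempty then
          (X (e.2.max' h2) : MvPolynomial (Fin n) k) • sym G k (e.1, e.2.erase (e.2.max' h2))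
          - ((-1 : MvPolynomial (Fin n) k) ^ (e.2.card + e.1.card)) •
              ((X (e.1.min' h1) : MvPolynomial (Fin n) k) •
                sym G k (e.1.erase (e.1.min' h1), e.2))
        else 0
      else 0
    else 0
  else 0

/-- The map `∂`, as an `S`-linear endomorphism of the total module. -/
def Pmap : Ftot n k →ₗ[MvPolynomial (Fin n) k] Ftot n k :=
  Finsupp.lsum ℕ fun e => LinearMap.smulRight LinearMap.id (partialCell G k e)

/-- The `k`-linear projection `π` of `S` fixing each monomial not in `I_G` and
annihilating each monomial in `I_G`. -/
def piMap : MvPolynomial (Fin n) k →ₗ[k] MvPolynomial (Fin n) k :=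
  (MvPolynomial.basisMonomials (Fin n) k).constr ℕ fun α =>
    if monomial α (1 : k) ∈ edgeIdeal G k then 0 else monomial α (1 : k)

/-- The `ℕⁿ`-multidegree of the basis vector `x^α [σ|τ]`: `α + Σ_{i ∈ σ∪τ} eᵢ`. -/
def mdeg (e : Cell n) (α : Fin n →₀ ℕ) : Fin n →₀ ℕ :=
  α + ∑ i ∈ e.1 ∪ e.2, Finsupp.single i 1

/-- The `μ`-homogeneous component of the resolution (as a `k`-subspace). -/
def Hsub (μ : Fin n →₀ ℕ) : Submodule k (Ftot n k) :=
  Submodule.span k {f : Ftot n k |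
    ∃ (e : Cell n) (α : Fin n →₀ ℕ), IsBasisCell G e ∧ mdeg e α = μ ∧
      f = Finsupp.single e (monomial α (1 : k))}

/-! ### Auxiliary development for stmt10 -/

theorem sym_of_basis {e : Cell n} (h : IsBasisCell G e) :
    sym G k e = Finsupp.single e 1 := if_pos h

theorem sym_of_not_basis {e : Cell n} (h : ¬ IsBasisCell G e) :
    sym G k e = 0 := if_neg h

theorem basis_lt {e : Cell n} (h : IsBasisCell G e) {s u : Fin n}
    (hs : s ∈ e.1) (hu : u ∈ e.2) : s < u := by
  rcases h with h | h
  · rw [h] at hs; exact absurd hs (Finset.notMem_empty _)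
  · exact h.2.2.2.1 s hs u hu

theorem basis_nonempty {e : Cell n} (h : IsBasisCell G e) (hne : e ≠ ((∅, ∅) : Cell n)) :
    e.1.Nonempty ∧ e.2.Nonempty := by
  rcases h with h | h
  · exact absurd h hne
  · exact ⟨h.1, h.2.1⟩

theorem basis_empty : IsBasisCell G ((∅, ∅) : Cell n) := Or.inl rfl

theorem basis_of_deg_zero {e : Cell n} (h : IsBasisCell G e) (hd : cellDeg e = 0) :
    e = ((∅, ∅) : Cell n) := by
  by_contra hne
  obtain ⟨h1, h2⟩ := basis_nonempty (G := G) h hne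
  have c1 := Finset.card_pos.2 h1
  have c2 := Finset.card_pos.2 h2
  unfold cellDeg at hd; omega

/-- Monotone adjacency (abstract form of the cointerval property). -/
def AdjMono (G : SimpleGraph (Fin n)) : Prop :=
  ∀ ⦃i u v : Fin n⦄, G.Adj i u → i < u → u ≤ v → G.Adj i v

/-- The invariant satisfied by every monomial term `x^β·e` of `bstar N cA cB`. -/
def GoodTerm (cA cB e : Cell n) (β : Fin n →₀ ℕ) : Prop :=
  IsBasisCell G e ∧ e.1.Nonempty ∧ e.2.Nonempty ∧
  (∀ l ∈ β.support, ∃ u ∈ e.2, l ≤ u) ∧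
  (∀ u ∈ cA.2, ∃ v ∈ e.2, u ≤ v) ∧
  (∀ u ∈ cB.2, ∃ v ∈ e.2, u ≤ v) ∧
  (e.2.card = 1 →
    (∀ l ∈ β.support, ∃ s ∈ e.1, s ≤ l) ∧
    (∀ s' ∈ cA.1, ∃ s ∈ e.1, s ≤ s') ∧
    (∀ s' ∈ cB.1, ∃ s ∈ e.1, s ≤ s'))

theorem GoodTerm_swap {cA cB e : Cell n} {β : Fin n →₀ ℕ}
    (h : GoodTerm G cA cB e β) : GoodTerm G cB cA e β := by
  obtain ⟨h0, h1, h2, h3, h4, h5, h6⟩ := h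
  exact ⟨h0, h1, h2, h3, h5, h4, fun hc => ⟨(h6 hc).1, (h6 hc).2.2, (h6 hc).2.1⟩⟩

/-- `f` has all its monomial terms satisfying the invariant. -/
def GoodF (cA cB : Cell n) (f : Ftot n k) : Prop :=
  ∀ e β, MvPolynomial.coeff β (f e) ≠ 0 → GoodTerm G cA cB e β

theorem GoodF_zero {cA cB : Cell n} : GoodF G k cA cB 0 := by
  intro e β h; simp at h

theorem GoodF_swap {cA cB : Cell n} {f : Ftot n k} (h : GoodF G k cA cB f) :
    GoodF G k cB cA f := fun e β hc => GoodTerm_swap G (h e β hc)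

theorem GoodF_add {cA cB : Cell n} {f g : Ftot n k}
    (hf : GoodF G k cA cB f) (hg : GoodF G k cA cB g) : GoodF G k cA cB (f + g) := by
  intro e β h
  rw [Finsupp.add_apply, MvPolynomial.coeff_add] at h
  by_cases h1 : MvPolynomial.coeff β (f e) ≠ 0
  · exact hf e β h1
  · push_neg at h1
    exact hg e β (by intro h2; rw [h1, h2] at h; simp at h)

theorem GoodF_sum {cA cB : Cell n} {ι : Type} {s : Finset ι} {v : ι → Ftot n k}
    (h : ∀ i ∈ s, GoodF G k cA cB (v i)) : GoodF G k cA cB (∑ i ∈ s, v i) := by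
  classical
  induction s using Finset.induction_on with
  | empty => simpa using GoodF_zero G k
  | insert _ _ hx ih =>
    rw [Finset.sum_insert hx]
    exact GoodF_add G k (h _ (Finset.mem_insert_self _ _))
      (ih fun i hi => h i (Finset.mem_insert_of_mem hi))

theorem GoodF_C_pow_smul {cA cB : Cell n} {f : Ftot n k} {m : ℕ}
    (h : GoodF G k cA cB f) :
    GoodF G k cA cB (((-1 : MvPolynomial (Fin n) k) ^ m) • f) := by
  intro e β hc
  apply h e β
  intro h0
  apply hc
  rw [Finsupp.smul_apply, smul_eq_mul,
    show ((-1 : MvPolynomial (Fin n) k) ^ m) = MvPolynomial.C ((-1 : k) ^ m) by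
      rw [map_pow, map_neg, map_one],
    MvPolynomial.coeff_C_mul, h0, mul_zero]

/-! ### Finsupp exponent helpers -/

theorem fs_addsub (β : Fin n →₀ ℕ) (j : Fin n) :
    β + Finsupp.single j 1 - Finsupp.single j 1 = β := by
  ext a; rw [Finsupp.tsub_apply, Finsupp.add_apply]; omega

theorem fs_addsub2 (β : Fin n →₀ ℕ) (i j : Fin n) :
    β + Finsupp.single i 1 + Finsupp.single j 1 - Finsupp.single j 1
      = β + Finsupp.single i 1 := by
  ext a; simp only [Finsupp.tsub_apply, Finsupp.add_apply]; omega

theorem fs_addsub3 (β : Fin n →₀ ℕ) (i j : Fin n) :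
    β + Finsupp.single i 1 + Finsupp.single j 1 - Finsupp.single i 1
      = β + Finsupp.single j 1 := by
  ext a; simp only [Finsupp.tsub_apply, Finsupp.add_apply]; omega

theorem fs_c3exp (β : Fin n →₀ ℕ) (i j t : Fin n) :
    β + Finsupp.single i 1 + Finsupp.single j 1 + Finsupp.single t 1
      - Finsupp.single j 1 - Finsupp.single i 1 = β + Finsupp.single t 1 := by
  ext a; simp only [Finsupp.tsub_apply, Finsupp.add_apply]; omega

theorem fs_subadd {α : Fin n →₀ ℕ} {j : Fin n} (h : j ∈ α.support) :
    α - Finsupp.single j 1 + Finsupp.single j 1 = α := by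
  rw [Finsupp.mem_support_iff] at h
  ext a
  rw [Finsupp.add_apply, Finsupp.tsub_apply]
  rcases eq_or_ne a j with rfl | hne
  · rw [Finsupp.single_eq_same]; omega
  · rw [Finsupp.single_eq_of_ne' (Ne.symm hne)]; omega

theorem mem_supp_add_single (β : Fin n →₀ ℕ) (j : Fin n) :
    j ∈ (β + Finsupp.single j 1).support := by
  rw [Finsupp.mem_support_iff, Finsupp.add_apply, Finsupp.single_eq_same]; omega

theorem mem_supp_cases1 {β : Fin n →₀ ℕ} {i l : Fin n}
    (h : l ∈ (β + Finsupp.single i 1).support) : l ∈ β.support ∨ l = i := by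
  by_contra hc
  push_neg at hc
  rw [Finsupp.mem_support_iff, Finsupp.add_apply, Finsupp.notMem_support_iff.1 hc.1,
    Finsupp.single_eq_of_ne' (Ne.symm hc.2)] at h
  exact h rfl

theorem mem_supp_cases2 {β : Fin n →₀ ℕ} {i j l : Fin n}
    (h : l ∈ (β + Finsupp.single i 1 + Finsupp.single j 1).support) :
    l ∈ β.support ∨ l = i ∨ l = j := by
  rcases mem_supp_cases1 h with h1 | h1
  · rcases mem_supp_cases1 h1 with h2 | h2
    · exact Or.inl h2
    · exact Or.inr (Or.inl h2)
  · exact Or.inr (Or.inr h1)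

theorem mem_supp_add2_left (β : Fin n →₀ ℕ) (i j : Fin n) :
    i ∈ (β + Finsupp.single i 1 + Finsupp.single j 1).support := by
  rw [Finsupp.mem_support_iff, Finsupp.add_apply, Finsupp.add_apply, Finsupp.single_eq_same]
  omega

theorem mem_supp_add2_right (β : Fin n →₀ ℕ) (i j : Fin n) :
    j ∈ (β + Finsupp.single i 1 + Finsupp.single j 1).support :=
  mem_supp_add_single _ j

theorem mem_supp_mono1 {β : Fin n →₀ ℕ} {i l : Fin n} (h : l ∈ β.support) :
    l ∈ (β + Finsupp.single i 1).support := by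
  rw [Finsupp.mem_support_iff] at h ⊢
  rw [Finsupp.add_apply]
  omega

/-! ### Plumbing: `Dmap`, `Pmap`, `biext`, `Cmap` -/

theorem Dmap_single (e : Cell n) :
    Dmap G k (Finsupp.single e 1) = diffCell G k e := by
  unfold Dmap
  rw [Finsupp.lsum_single]
  simp

theorem Pmap_single (e : Cell n) :
    Pmap G k (Finsupp.single e 1) = partialCell G k e := by
  unfold Pmap
  rw [Finsupp.lsum_single]
  simp

theorem biext_single_right (bb : Cell n → Cell n → Ftot n k) (f : Ftot n k) (d : Cell n) :
    biext k bb f (Finsupp.single d 1) = f.sum fun c m => m • bb c d := by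
  unfold biext
  rw [Finsupp.support_single_ne_zero d one_ne_zero]
  refine Finset.sum_congr rfl fun c _ => ?_
  rw [Finset.sum_singleton, Finsupp.single_eq_same, mul_one]

theorem biext_single_left (bb : Cell n → Cell n → Ftot n k) (c : Cell n) (g : Ftot n k) :
    biext k bb (Finsupp.single c 1) g = g.sum fun d m => m • bb c d := by
  unfold biext
  rw [Finsupp.support_single_ne_zero c one_ne_zero, Finset.sum_singleton]
  refine Finset.sum_congr rfl fun d _ => ?_
  rw [Finsupp.single_eq_same, one_mul]

theorem Cmap_single_monomial (e : Cell n) (α : Fin n →₀ ℕ) (c : k) :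
    Cmap G k (Finsupp.single e (MvPolynomial.monomial α c)) = c • cMono G k e α := by
  have h1 : (Finsupp.single e (MvPolynomial.monomial α c) : Ftot n k)
      = c • (FBasis n k) ⟨e, α⟩ := by
    rw [show ((FBasis n k) ⟨e, α⟩ : Ftot n k)
        = Finsupp.single e (MvPolynomial.monomial α (1 : k)) by
      unfold FBasis
      rw [Finsupp.coe_basis]
      simp [MvPolynomial.coe_basisMonomials]]
    rw [Finsupp.smul_single, MvPolynomial.smul_monomial, smul_eq_mul, mul_one]
  rw [h1, map_smul]
  unfold Cmap
  rw [Module.Basis.constr_basis]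

theorem ftot_eq_zero {f : Ftot n k}
    (h : ∀ e α, MvPolynomial.coeff α (f e) = 0) : f = 0 := by
  ext e α
  exact h e α

theorem ftot_decomp (f : Ftot n k) :
    f = ∑ e ∈ f.support, ∑ α ∈ (f e).support,
        Finsupp.single e (MvPolynomial.monomial α (MvPolynomial.coeff α (f e))) := by
  conv_lhs => rw [← Finsupp.sum_single f]
  rw [Finsupp.sum]
  refine Finset.sum_congr rfl fun e _ => ?_
  conv_lhs => rw [(f e).as_sum]
  exact map_sum (Finsupp.singleAddHom e) _ _

theorem Cmap_decomp (f : Ftot n k) :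
    Cmap G k f = ∑ e ∈ f.support, ∑ α ∈ (f e).support,
        (MvPolynomial.coeff α (f e)) • cMono G k e α := by
  conv_lhs => rw [ftot_decomp k f]
  rw [map_sum]
  refine Finset.sum_congr rfl fun e _ => ?_
  rw [map_sum]
  exact Finset.sum_congr rfl fun α _ => Cmap_single_monomial G k e α _

/-- Propagation of a per-term property through `Cmap`. -/
theorem Cmap_terms {f : Ftot n k} {P : Cell n → (Fin n →₀ ℕ) → Prop}
    (hf : ∀ e α, MvPolynomial.coeff α (f e) ≠ 0 →
      ∀ e' α', MvPolynomial.coeff α' ((cMono G k e α) e') ≠ 0 → P e' α') :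
    ∀ e' α', MvPolynomial.coeff α' ((Cmap G k f) e') ≠ 0 → P e' α' := by
  intro e' α' hne
  rw [Cmap_decomp] at hne
  rw [Finsupp.finset_sum_apply, MvPolynomial.coeff_sum] at hne
  obtain ⟨e, _, hne2⟩ := Finset.exists_ne_zero_of_sum_ne_zero hne
  rw [Finsupp.finset_sum_apply, MvPolynomial.coeff_sum] at hne2
  obtain ⟨α, _, hne3⟩ := Finset.exists_ne_zero_of_sum_ne_zero hne2
  rw [Finsupp.smul_apply, MvPolynomial.coeff_smul, smul_eq_mul] at hne3
  exact hf e α (fun h0 => hne3 (by rw [h0, zero_mul])) e' α'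
    (fun h0 => hne3 (by rw [h0, mul_zero]))

/-- `Cmap` kills an element all of whose terms are killed by `cMono`. -/
theorem Cmap_eq_zero {f : Ftot n k}
    (hf : ∀ e α, MvPolynomial.coeff α (f e) ≠ 0 → cMono G k e α = 0) :
    Cmap G k f = 0 := by
  apply ftot_eq_zero
  intro e' α'
  by_contra hc
  exact Cmap_terms G k (P := fun _ _ => False)
    (fun e α h1 e'' α'' h2 => by rw [hf e α h1] at h2; simp at h2) e' α' hc

/-! ### `cMono` branch computations -/

theorem cMono_not_basis {e : Cell n} {α : Fin n →₀ ℕ} (h : ¬ IsBasisCell G e) :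
    cMono G k e α = 0 := by
  unfold cMono; rw [if_neg h]

theorem cMono_zero_c1 {e : Cell n} {α : Fin n →₀ ℕ} (hb : IsBasisCell G e)
    (hτ : e.2.Nonempty) (hc : e.2.card ≠ 1) (hC1 : C1set e.2 α = ∅) :
    cMono G k e α = 0 := by
  unfold cMono
  rw [if_pos hb, dif_pos hτ, if_neg hc, dif_neg (by rw [hC1]; exact Finset.not_nonempty_empty)]

theorem cMono_zero_c1c2 {e : Cell n} {α : Fin n →₀ ℕ} (hb : IsBasisCell G e)
    (hτ : e.2.Nonempty) (hc : e.2.card = 1) (hC1 : C1set e.2 α = ∅)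
    (hC2 : C2set G e.1 e.2 α = ∅) :
    cMono G k e α = 0 := by
  unfold cMono
  rw [if_pos hb, dif_pos hτ, if_pos hc]
  simp only []
  rw [dif_neg (by rw [hC1]; exact Finset.not_nonempty_empty),
    dif_neg (by rw [hC2]; exact Finset.not_nonempty_empty)]

theorem cMono_c2_branch {e : Cell n} {α : Fin n →₀ ℕ} {j : Fin n} (hb : IsBasisCell G e)
    (hτ : e.2.Nonempty) (hc : e.2.card = 1) (hC1 : C1set e.2 α = ∅)
    (hC2 : (C2set G e.1 e.2 α).Nonempty) (hmin : (C2set G e.1 e.2 α).min' hC2 = j) :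
    cMono G k e α = ((-1 : MvPolynomial (Fin n) k) ^ (e.1.card + 1)) •
      ((MvPolynomial.monomial (α - Finsupp.single j 1) (1 : k)) •
        sym G k (insert j e.1, e.2)) := by
  unfold cMono
  rw [if_pos hb, dif_pos hτ, if_pos hc]
  simp only []
  rw [dif_neg (by rw [hC1]; exact Finset.not_nonempty_empty), dif_pos hC2, hmin]

theorem cMono_c1_branch1 {e : Cell n} {α : Fin n →₀ ℕ} {j : Fin n} (hb : IsBasisCell G e)
    (hτ : e.2.Nonempty) (hc : e.2.card = 1)
    (hC1 : (C1set e.2 α).Nonempty) (hmax : (C1set e.2 α).max' hC1 = j)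
    (hC3 : C3set G e.1 α = ∅) :
    cMono G k e α = (MvPolynomial.monomial (α - Finsupp.single j 1) (1 : k)) •
      sym G k (e.1, insert j e.2) := by
  unfold cMono
  rw [if_pos hb, dif_pos hτ, if_pos hc]
  simp only []
  rw [dif_pos hC1, hmax, dif_neg (by rw [hC3]; exact Finset.not_nonempty_empty), add_zero]

theorem cMono_c1c3_branch {e : Cell n} {α : Fin n →₀ ℕ} {i j : Fin n} (hb : IsBasisCell G e)
    (hτ : e.2.Nonempty) (hc : e.2.card = 1)
    (hC1 : (C1set e.2 α).Nonempty) (hmax : (C1set e.2 α).max' hC1 = j)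
    (hC3 : (C3set G e.1 α).Nonempty) (hmin3 : (C3set G e.1 α).min' hC3 = i) :
    cMono G k e α = (MvPolynomial.monomial (α - Finsupp.single j 1) (1 : k)) •
      sym G k (e.1, insert j e.2)
      + ((-1 : MvPolynomial (Fin n) k) ^ (e.1.card + 1)) •
        ((MvPolynomial.monomial
            (α + Finsupp.single (e.2.max' hτ) 1 - Finsupp.single j 1 - Finsupp.single i 1)
            (1 : k)) • sym G k (insert i e.1, ({j} : Finset (Fin n)))) := by
  unfold cMono
  rw [if_pos hb, dif_pos hτ, if_pos hc]
  simp only []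
  rw [dif_pos hC1, hmax, dif_pos hC3, hmin3]

theorem cMono_c1_card2 {e : Cell n} {α : Fin n →₀ ℕ} {j : Fin n} (hb : IsBasisCell G e)
    (hτ : e.2.Nonempty) (hc : e.2.card ≠ 1)
    (hC1 : (C1set e.2 α).Nonempty) (hmax : (C1set e.2 α).max' hC1 = j) :
    cMono G k e α = (MvPolynomial.monomial (α - Finsupp.single j 1) (1 : k)) •
      sym G k (e.1, insert j e.2) := by
  unfold cMono
  rw [if_pos hb, dif_pos hτ, if_neg hc, dif_pos hC1, hmax]

theorem cMono_empty (α : Fin n →₀ ℕ) :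
    cMono G k ((∅, ∅) : Cell n) α = cZero G k α := by
  unfold cMono
  rw [if_pos (basis_empty G), dif_neg (by simp)]

/-! ### `C`-set membership -/

theorem mem_C1set {τ : Finset (Fin n)} {α : Fin n →₀ ℕ} {i : Fin n} :
    i ∈ C1set τ α ↔ i ∈ α.support ∧ ∀ j ∈ τ, j < i := Finset.mem_filter

theorem mem_C2set {σ τ : Finset (Fin n)} {α : Fin n →₀ ℕ} {i : Fin n} :
    i ∈ C2set G σ τ α ↔ i ∈ α.support ∧
      ((∀ s ∈ σ, i < s) ∧ ∀ j ∈ τ, (∀ j' ∈ τ, j ≤ j') → G.Adj i j) := Finset.mem_filter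

theorem mem_C3set {σ : Finset (Fin n)} {α : Fin n →₀ ℕ} {i : Fin n} :
    i ∈ C3set G σ α ↔ i ∈ α.support ∧
      ((∀ s ∈ σ, i < s) ∧ ∀ m ∈ α.support, (∀ m' ∈ α.support, m' ≤ m) →
        (i < m ∧ G.Adj i m)) := Finset.mem_filter

/-- The central killing fact: if a term is `Good` and `x_j` is sandwiched between the
cell's column minimum and row maximum, then `c` kills `x^{β+e_j}·e`. -/
theorem cMono_kill {cA cB e : Cell n} {β : Fin n →₀ ℕ} (hg : GoodTerm G cA cB e β)
    {j : Fin n} (hj1 : ∃ u ∈ e.2, j ≤ u) (hj2 : e.2.card = 1 → ∃ s ∈ e.1, s < j) :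
    cMono G k e (β + Finsupp.single j 1) = 0 := by
  obtain ⟨hb, hσ, hτ, hP2, _, _, hP4⟩ := hg
  have hC1 : C1set e.2 (β + Finsupp.single j 1) = ∅ := by
    rw [Finset.eq_empty_iff_forall_notMem]
    intro l hl
    obtain ⟨hls, hlgt⟩ := mem_C1set.1 hl
    rcases mem_supp_cases1 hls with h | rfl
    · obtain ⟨u, hu, hle⟩ := hP2 l h
      exact absurd hle (not_le.2 (hlgt u hu))
    · obtain ⟨u, hu, hle⟩ := hj1
      exact absurd hle (not_le.2 (hlgt u hu))
  by_cases hc : e.2.card = 1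
  · have hC2 : C2set G e.1 e.2 (β + Finsupp.single j 1) = ∅ := by
      rw [Finset.eq_empty_iff_forall_notMem]
      intro l hl
      obtain ⟨hls, hlt, -⟩ := (mem_C2set G).1 hl
      rcases mem_supp_cases1 hls with h | rfl
      · obtain ⟨s, hs, hle⟩ := (hP4 hc).1 l h
        exact absurd (hlt s hs) (not_lt.2 hle)
      · obtain ⟨s, hs, hlt'⟩ := hj2 hc
        exact absurd (hlt s hs) (not_lt.2 (le_of_lt hlt'))
    exact cMono_zero_c1c2 G k hb hτ hc hC1 hC2
  · exact cMono_zero_c1 G k hb hτ hc hC1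

theorem coeff_single_monomial_ne {c e' : Cell n} {δ β' : Fin n →₀ ℕ} {r : k}
    (h : MvPolynomial.coeff β'
      ((Finsupp.single c (MvPolynomial.monomial δ r) : Ftot n k) e') ≠ 0) :
    e' = c ∧ β' = δ := by
  rcases eq_or_ne e' c with rfl | hne
  · refine ⟨rfl, ?_⟩
    rw [Finsupp.single_eq_same, MvPolynomial.coeff_monomial] at h
    by_contra hne2
    rw [if_neg (fun hh => hne2 hh.symm)] at h
    exact h rfl
  · rw [Finsupp.single_eq_of_ne' (Ne.symm hne)] at h
    simp at h

/-- Terms of `(±x^γ) • single c (monomial δ 1)`-style outputs of `cMono`. -/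
theorem coeff_smul_sym_ne {c e' : Cell n} {δ β' : Fin n →₀ ℕ}
    (h : MvPolynomial.coeff β'
      (((MvPolynomial.monomial δ (1 : k)) • sym G k c) e') ≠ 0) :
    IsBasisCell G c ∧ e' = c ∧ β' = δ := by
  by_cases hb : IsBasisCell G c
  · rw [sym_of_basis G k hb, Finsupp.smul_single', mul_one] at h
    exact ⟨hb, coeff_single_monomial_ne k h⟩
  · rw [sym_of_not_basis G k hb, smul_zero] at h
    simp at h

theorem coeff_pow_smul_ne {f : Ftot n k} {e' : Cell n} {β' : Fin n →₀ ℕ} {m : ℕ}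
    (h : MvPolynomial.coeff β' ((((-1 : MvPolynomial (Fin n) k) ^ m) • f) e') ≠ 0) :
    MvPolynomial.coeff β' (f e') ≠ 0 := by
  intro h0
  apply h
  rw [Finsupp.smul_apply, smul_eq_mul,
    show ((-1 : MvPolynomial (Fin n) k) ^ m) = MvPolynomial.C ((-1 : k) ^ m) by
      rw [map_pow, map_neg, map_one],
    MvPolynomial.coeff_C_mul, h0, mul_zero]

/-! ### The induction steps -/

theorem step_sigma {cA cB : Cell n} (hA : IsBasisCell G cA) (hA2 : cA.2.Nonempty)
    {j : Fin n} (hj : j ∈ cA.1)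
    {e : Cell n} {β : Fin n →₀ ℕ}
    (hg : GoodTerm G (cA.1.erase j, cA.2) cB e β) :
    ∀ e' α', MvPolynomial.coeff α'
        ((cMono G k e (β + Finsupp.single j 1)) e') ≠ 0 →
      GoodTerm G cA cB e' α' := by
  intro e' α' hco
  obtain ⟨hbe, hσ, hτ, hP2, hP3A, hP3B, hP4⟩ := hg
  set γ := β + Finsupp.single j 1 with hγ
  -- `j` lies below some member of `e.2`
  have hjle : ∃ v ∈ e.2, j ≤ v := by
    obtain ⟨u0, hu0⟩ := hA2
    obtain ⟨v, hv, hle⟩ := hP3A u0 hu0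
    exact ⟨v, hv, le_of_lt (lt_of_lt_of_le (basis_lt G hA hj hu0) hle)⟩
  have hC1 : C1set e.2 γ = ∅ := by
    rw [Finset.eq_empty_iff_forall_notMem]
    intro l hl
    obtain ⟨hls, hlgt⟩ := mem_C1set.1 hl
    rcases mem_supp_cases1 hls with h | rfl
    · obtain ⟨u, hu, hle⟩ := hP2 l h
      exact absurd hle (not_le.2 (hlgt u hu))
    · obtain ⟨v, hv, hle⟩ := hjle
      exact absurd hle (not_le.2 (hlgt v hv))
  by_cases hc : e.2.card = 1
  · -- C2set ⊆ {j}
    have hC2sub : C2set G e.1 e.2 γ ⊆ {j} := by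
      intro l hl
      obtain ⟨hls, hlt, -⟩ := (mem_C2set G).1 hl
      rcases mem_supp_cases1 hls with h | rfl
      · obtain ⟨s, hs, hle⟩ := (hP4 hc).1 l h
        exact absurd (hlt s hs) (not_lt.2 hle)
      · exact Finset.mem_singleton_self _
    by_cases hC2 : (C2set G e.1 e.2 γ).Nonempty
    · have hmin : (C2set G e.1 e.2 γ).min' hC2 = j :=
        Finset.mem_singleton.1 (hC2sub (Finset.min'_mem _ hC2))
      rw [cMono_c2_branch G k hbe hτ hc hC1 hC2 hmin] at hco
      replace hco := coeff_pow_smul_ne k hco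
      rw [show γ - Finsupp.single j 1 = β from fs_addsub β j] at hco
      obtain ⟨hb', he', hβ'⟩ := coeff_smul_sym_ne G k hco
      subst he'; subst hβ'
      refine ⟨hb', ⟨j, Finset.mem_insert_self _ _⟩, hτ, hP2, hP3A, hP3B, fun hc' => ?_⟩
      obtain ⟨q1, q2, q3⟩ := hP4 hc'
      refine ⟨fun l hl => ?_, fun s' hs' => ?_, fun s' hs' => ?_⟩
      · obtain ⟨s, hs, hle⟩ := q1 l hl
        exact ⟨s, Finset.mem_insert_of_mem hs, hle⟩
      · rcases eq_or_ne s' j with rfl | hne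
        · exact ⟨s', Finset.mem_insert_self _ _, le_refl _⟩
        · obtain ⟨s, hs, hle⟩ := q2 s' (Finset.mem_erase.2 ⟨hne, hs'⟩)
          exact ⟨s, Finset.mem_insert_of_mem hs, hle⟩
      · obtain ⟨s, hs, hle⟩ := q3 s' hs'
        exact ⟨s, Finset.mem_insert_of_mem hs, hle⟩
    · rw [cMono_zero_c1c2 G k hbe hτ hc hC1
        (Finset.not_nonempty_iff_eq_empty.1 hC2)] at hco
      simp at hco
  · rw [cMono_zero_c1 G k hbe hτ hc hC1] at hco
    simp at hco

theorem step_tau {cA cB : Cell n} (hA : IsBasisCell G cA) (hA1 : cA.1.Nonempty)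
    {j : Fin n} (hj : j ∈ cA.2)
    {e : Cell n} {β : Fin n →₀ ℕ}
    (hg : GoodTerm G (cA.1, cA.2.erase j) cB e β) :
    ∀ e' α', MvPolynomial.coeff α'
        ((cMono G k e (β + Finsupp.single j 1)) e') ≠ 0 →
      GoodTerm G cA cB e' α' := by
  intro e' α' hco
  obtain ⟨hbe, hσ, hτ, hP2, hP3A, hP3B, hP4⟩ := hg
  set γ := β + Finsupp.single j 1 with hγ
  obtain ⟨s₀, hs₀⟩ := hA1
  have hs₀j : s₀ < j := basis_lt G hA hs₀ hj
  have hC1sub : C1set e.2 γ ⊆ {j} := by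
    intro l hl
    obtain ⟨hls, hlgt⟩ := mem_C1set.1 hl
    rcases mem_supp_cases1 hls with h | rfl
    · obtain ⟨u, hu, hle⟩ := hP2 l h
      exact absurd hle (not_le.2 (hlgt u hu))
    · exact Finset.mem_singleton_self _
  by_cases hC1 : (C1set e.2 γ).Nonempty
  · -- C1set = {j}
    have hmax : (C1set e.2 γ).max' hC1 = j :=
      Finset.mem_singleton.1 (hC1sub (Finset.max'_mem _ hC1))
    have hjC1 : j ∈ C1set e.2 γ := by rw [← hmax]; exact Finset.max'_mem _ hC1
    have hjgt : ∀ u ∈ e.2, u < j := (mem_C1set.1 hjC1).2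
    have hjne : j ∉ e.2 := fun hje => lt_irrefl j (hjgt j hje)
    -- goodness of the output cell `(e.1, insert j e.2)` with exponent `β`
    have hgood1 : IsBasisCell G (e.1, insert j e.2) →
        GoodTerm G cA cB (e.1, insert j e.2) β := by
      intro hb'
      refine ⟨hb', hσ, ⟨j, Finset.mem_insert_self _ _⟩, ?_, ?_, ?_, ?_⟩
      · intro l hl
        obtain ⟨u, hu, hle⟩ := hP2 l hl
        exact ⟨u, Finset.mem_insert_of_mem hu, hle⟩
      · intro u hu
        rcases eq_or_ne u j with rfl | hne
        · exact ⟨u, Finset.mem_insert_self _ _, le_refl _⟩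
        · obtain ⟨v, hv, hle⟩ := hP3A u (Finset.mem_erase.2 ⟨hne, hu⟩)
          exact ⟨v, Finset.mem_insert_of_mem hv, hle⟩
      · intro u hu
        obtain ⟨v, hv, hle⟩ := hP3B u hu
        exact ⟨v, Finset.mem_insert_of_mem hv, hle⟩
      · intro hcard
        exfalso
        rw [Finset.card_insert_of_notMem hjne] at hcard
        have := Finset.card_pos.2 hτ
        omega
    by_cases hc : e.2.card = 1
    · -- C3set = ∅
      have hC3 : C3set G e.1 γ = ∅ := by
        rw [Finset.eq_empty_iff_forall_notMem]
        intro l hl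
        obtain ⟨hls, hlt, -⟩ := (mem_C3set G).1 hl
        rcases mem_supp_cases1 hls with h | rfl
        · obtain ⟨s, hs, hle⟩ := (hP4 hc).1 l h
          exact absurd (hlt s hs) (not_lt.2 hle)
        · obtain ⟨s, hs, hle⟩ := (hP4 hc).2.1 s₀ hs₀
          exact absurd (hlt s hs) (not_lt.2 (le_of_lt (lt_of_le_of_lt hle hs₀j)))
      rw [cMono_c1_branch1 G k hbe hτ hc hC1 hmax hC3] at hco
      rw [show γ - Finsupp.single j 1 = β from fs_addsub β j] at hco
      obtain ⟨hb', he', hβ'⟩ := coeff_smul_sym_ne G k hco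
      subst he'; subst hβ'
      exact hgood1 hb'
    · rw [cMono_c1_card2 G k hbe hτ hc hC1 hmax] at hco
      rw [show γ - Finsupp.single j 1 = β from fs_addsub β j] at hco
      obtain ⟨hb', he', hβ'⟩ := coeff_smul_sym_ne G k hco
      subst he'; subst hβ'
      exact hgood1 hb'
  · have hC1e : C1set e.2 γ = ∅ := Finset.not_nonempty_iff_eq_empty.1 hC1
    by_cases hc : e.2.card = 1
    · have hC2 : C2set G e.1 e.2 γ = ∅ := by
        rw [Finset.eq_empty_iff_forall_notMem]
        intro l hl
        obtain ⟨hls, hlt, -⟩ := (mem_C2set G).1 hl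
        rcases mem_supp_cases1 hls with h | rfl
        · obtain ⟨s, hs, hle⟩ := (hP4 hc).1 l h
          exact absurd (hlt s hs) (not_lt.2 hle)
        · obtain ⟨s, hs, hle⟩ := (hP4 hc).2.1 s₀ hs₀
          exact absurd (hlt s hs) (not_lt.2 (le_of_lt (lt_of_le_of_lt hle hs₀j)))
      rw [cMono_zero_c1c2 G k hbe hτ hc hC1e hC2] at hco
      simp at hco
    · rw [cMono_zero_c1 G k hbe hτ hc hC1e] at hco
      simp at hco

theorem step_two {cB : Cell n} {i j : Fin n} (hij : i < j) (hadj : G.Adj i j)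
    (hAM : AdjMono G)
    {e : Cell n} {β : Fin n →₀ ℕ}
    (hg : GoodTerm G ((∅, ∅) : Cell n) cB e β) :
    ∀ e' α', MvPolynomial.coeff α'
        ((cMono G k e (β + Finsupp.single i 1 + Finsupp.single j 1)) e') ≠ 0 →
      GoodTerm G (({i}, {j}) : Cell n) cB e' α' := by
  intro e' α' hco
  obtain ⟨hbe, hσ, hτ, hP2, hP3A, hP3B, hP4⟩ := hg
  set γ := β + Finsupp.single i 1 + Finsupp.single j 1 with hγ
  by_cases hjle : ∃ u ∈ e.2, j ≤ u
  · -- `C1 = ∅`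
    have hC1 : C1set e.2 γ = ∅ := by
      rw [Finset.eq_empty_iff_forall_notMem]
      intro l hl
      obtain ⟨hls, hlgt⟩ := mem_C1set.1 hl
      obtain ⟨u, hu, hle⟩ := hjle
      rcases mem_supp_cases2 hls with h | rfl | rfl
      · obtain ⟨u', hu', hle'⟩ := hP2 l h
        exact absurd hle' (not_le.2 (hlgt u' hu'))
      · exact absurd (le_of_lt (lt_of_lt_of_le hij hle)) (not_le.2 (hlgt u hu))
      · exact absurd hle (not_le.2 (hlgt u hu))
    by_cases hc : e.2.card = 1
    · obtain ⟨t, ht⟩ := Finset.card_eq_one.1 hc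
      have htmem : t ∈ e.2 := by rw [ht]; exact Finset.mem_singleton_self t
      have hjt : j ≤ t := by
        obtain ⟨u, hu, hle⟩ := hjle
        rw [ht, Finset.mem_singleton] at hu
        rwa [hu] at hle
      have hC2sub : C2set G e.1 e.2 γ ⊆ {i, j} := by
        intro l hl
        obtain ⟨hls, hlt, -⟩ := (mem_C2set G).1 hl
        rcases mem_supp_cases2 hls with h | rfl | rfl
        · obtain ⟨s, hs, hle⟩ := (hP4 hc).1 l h
          exact absurd (hlt s hs) (not_lt.2 hle)
        · exact Finset.mem_insert_self _ _
        · exact Finset.mem_insert_of_mem (Finset.mem_singleton_self _)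
      by_cases hC2 : (C2set G e.1 e.2 γ).Nonempty
      · have hmin : (C2set G e.1 e.2 γ).min' hC2 = i := by
          have hm := Finset.min'_mem _ hC2
          rcases Finset.mem_insert.1 (hC2sub hm) with h | h
          · exact h
          · -- the minimum is `j`; then `j ∈ C2set`, hence also `i ∈ C2set`: contradiction
            exfalso
            rw [Finset.mem_singleton] at h
            rw [h] at hm
            obtain ⟨-, hjs, -⟩ := (mem_C2set G).1 hm
            have hiC2 : i ∈ C2set G e.1 e.2 γ := by
              refine (mem_C2set G).2 ⟨mem_supp_add2_left β i j, fun s hs =>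
                lt_trans hij (hjs s hs), fun u hu _ => ?_⟩
              rw [ht, Finset.mem_singleton] at hu
              rw [hu]
              exact hAM hadj hij hjt
            have := Finset.min'_le _ _ hiC2
            rw [h] at this
            exact absurd this (not_le.2 hij)
        rw [cMono_c2_branch G k hbe hτ hc hC1 hC2 hmin] at hco
        replace hco := coeff_pow_smul_ne k hco
        rw [show γ - Finsupp.single i 1 = β + Finsupp.single j 1 from fs_addsub3 β i j] at hco
        obtain ⟨hb', he', hβ'⟩ := coeff_smul_sym_ne G k hco
        subst he'; subst hβ'
        refine ⟨hb', ⟨i, Finset.mem_insert_self _ _⟩, hτ, ?_, ?_, ?_, ?_⟩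
        · intro l hl
          rcases mem_supp_cases1 hl with h | rfl
          · exact hP2 l h
          · exact hjle
        · intro u hu
          rw [Finset.mem_singleton] at hu
          rw [hu]
          exact hjle
        · exact hP3B
        · intro hc'
          obtain ⟨q1, q2, q3⟩ := hP4 hc'
          refine ⟨fun l hl => ?_, fun s' hs' => ?_, fun s' hs' => ?_⟩
          · rcases mem_supp_cases1 hl with h | rfl
            · obtain ⟨s, hs, hle⟩ := q1 l h
              exact ⟨s, Finset.mem_insert_of_mem hs, hle⟩
            · exact ⟨i, Finset.mem_insert_self _ _, le_of_lt hij⟩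
          · rw [Finset.mem_singleton] at hs'
            exact ⟨i, Finset.mem_insert_self _ _, by rw [hs']⟩
          · obtain ⟨s, hs, hle⟩ := q3 s' hs'
            exact ⟨s, Finset.mem_insert_of_mem hs, hle⟩
      · rw [cMono_zero_c1c2 G k hbe hτ hc hC1
          (Finset.not_nonempty_iff_eq_empty.1 hC2)] at hco
        simp at hco
    · rw [cMono_zero_c1 G k hbe hτ hc hC1] at hco
      simp at hco
  · -- `j` dominates `e.2`: the `C1`-branch
    push_neg at hjle
    have hjgt : ∀ u ∈ e.2, u < j := hjle
    have hjne : j ∉ e.2 := fun hje => lt_irrefl j (hjgt j hje)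
    have hjC1 : j ∈ C1set e.2 γ := mem_C1set.2 ⟨mem_supp_add2_right β i j, hjgt⟩
    have hC1 : (C1set e.2 γ).Nonempty := ⟨j, hjC1⟩
    have hC1sub : C1set e.2 γ ⊆ {i, j} := by
      intro l hl
      obtain ⟨hls, hlgt⟩ := mem_C1set.1 hl
      rcases mem_supp_cases2 hls with h | rfl | rfl
      · obtain ⟨u', hu', hle'⟩ := hP2 l h
        exact absurd hle' (not_le.2 (hlgt u' hu'))
      · exact Finset.mem_insert_self _ _
      · exact Finset.mem_insert_of_mem (Finset.mem_singleton_self _)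
    have hmax : (C1set e.2 γ).max' hC1 = j := by
      have hm := Finset.max'_mem _ hC1
      rcases Finset.mem_insert.1 (hC1sub hm) with h | h
      · exfalso
        have := Finset.le_max' _ _ hjC1
        rw [h] at this
        exact absurd this (not_le.2 hij)
      · exact Finset.mem_singleton.1 h
    -- goodness of the first output
    have hgood1 : IsBasisCell G (e.1, insert j e.2) →
        GoodTerm G (({i}, {j}) : Cell n) cB (e.1, insert j e.2)
          (β + Finsupp.single i 1) := by
      intro hb'
      refine ⟨hb', hσ, ⟨j, Finset.mem_insert_self _ _⟩, ?_, ?_, ?_, ?_⟩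
      · intro l hl
        rcases mem_supp_cases1 hl with h | rfl
        · obtain ⟨u, hu, hle⟩ := hP2 l h
          exact ⟨u, Finset.mem_insert_of_mem hu, hle⟩
        · exact ⟨j, Finset.mem_insert_self _ _, le_of_lt hij⟩
      · intro u hu
        rw [Finset.mem_singleton] at hu
        rw [hu]
        exact ⟨j, Finset.mem_insert_self _ _, le_refl _⟩
      · intro u hu
        obtain ⟨v, hv, hle⟩ := hP3B u hu
        exact ⟨v, Finset.mem_insert_of_mem hv, hle⟩
      · intro hcard
        exfalso
        rw [Finset.card_insert_of_notMem hjne] at hcard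
        have := Finset.card_pos.2 hτ
        omega
    by_cases hc : e.2.card = 1
    · obtain ⟨t, ht⟩ := Finset.card_eq_one.1 hc
      have htmem : t ∈ e.2 := by rw [ht]; exact Finset.mem_singleton_self t
      have htj : t < j := hjgt t htmem
      have hmax2 : e.2.max' hτ = t := by
        refine le_antisymm (Finset.max'_le _ _ _ fun x hx => ?_) (Finset.le_max' _ _ htmem)
        rw [ht, Finset.mem_singleton] at hx
        exact le_of_eq hx
      have hC3sub : C3set G e.1 γ ⊆ {i} := by
        intro l hl
        obtain ⟨hls, hlt, -⟩ := (mem_C3set G).1 hl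
        rcases mem_supp_cases2 hls with h | rfl | rfl
        · obtain ⟨s, hs, hle⟩ := (hP4 hc).1 l h
          exact absurd (hlt s hs) (not_lt.2 hle)
        · exact Finset.mem_singleton_self _
        · exfalso
          obtain ⟨s₁, hs₁⟩ := hσ
          exact absurd (hlt s₁ hs₁)
            (not_lt.2 (le_of_lt (lt_trans (basis_lt G hbe hs₁ htmem) htj)))
      -- goodness of the second (C3) output
      have hgood2 : IsBasisCell G (insert i e.1, ({j} : Finset (Fin n))) →
          GoodTerm G (({i}, {j}) : Cell n) cB (insert i e.1, ({j} : Finset (Fin n)))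
            (β + Finsupp.single t 1) := by
        intro hb'
        refine ⟨hb', ⟨i, Finset.mem_insert_self _ _⟩, ⟨j, Finset.mem_singleton_self _⟩,
          ?_, ?_, ?_, ?_⟩
        · intro l hl
          rcases mem_supp_cases1 hl with h | rfl
          · obtain ⟨u, hu, hle⟩ := hP2 l h
            rw [ht, Finset.mem_singleton] at hu
            exact ⟨j, Finset.mem_singleton_self _, le_of_lt (lt_of_le_of_lt (hu ▸ hle) htj)⟩
          · exact ⟨j, Finset.mem_singleton_self _, le_of_lt htj⟩
        · intro u hu
          rw [Finset.mem_singleton] at hu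
          exact ⟨j, Finset.mem_singleton_self _, by rw [hu]⟩
        · intro u hu
          obtain ⟨v, hv, hle⟩ := hP3B u hu
          rw [ht, Finset.mem_singleton] at hv
          exact ⟨j, Finset.mem_singleton_self _, le_of_lt (lt_of_le_of_lt (hv ▸ hle) htj)⟩
        · intro _
          obtain ⟨q1, q2, q3⟩ := hP4 hc
          refine ⟨fun l hl => ?_, fun s' hs' => ?_, fun s' hs' => ?_⟩
          · rcases mem_supp_cases1 hl with h | rfl
            · obtain ⟨s, hs, hle⟩ := q1 l h
              exact ⟨s, Finset.mem_insert_of_mem hs, hle⟩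
            · obtain ⟨s₁, hs₁⟩ := hσ
              exact ⟨s₁, Finset.mem_insert_of_mem hs₁,
                le_of_lt (basis_lt G hbe hs₁ htmem)⟩
          · rw [Finset.mem_singleton] at hs'
            exact ⟨i, Finset.mem_insert_self _ _, by rw [hs']⟩
          · obtain ⟨s, hs, hle⟩ := q3 s' hs'
            exact ⟨s, Finset.mem_insert_of_mem hs, hle⟩
      by_cases hC3 : (C3set G e.1 γ).Nonempty
      · have hmin3 : (C3set G e.1 γ).min' hC3 = i :=
          Finset.mem_singleton.1 (hC3sub (Finset.min'_mem _ hC3))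
        rw [cMono_c1c3_branch G k hbe hτ hc hC1 hmax hC3 hmin3] at hco
        rw [Finsupp.add_apply, MvPolynomial.coeff_add] at hco
        by_cases h1 : MvPolynomial.coeff α'
            (((MvPolynomial.monomial (γ - Finsupp.single j 1) (1 : k)) •
              sym G k (e.1, insert j e.2)) e') ≠ 0
        · rw [show γ - Finsupp.single j 1 = β + Finsupp.single i 1
            from fs_addsub2 β i j] at h1
          obtain ⟨hb', he', hβ'⟩ := coeff_smul_sym_ne G k h1
          subst he'; subst hβ'
          exact hgood1 hb'
        · push_neg at h1
          rw [h1, zero_add] at hco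
          replace hco := coeff_pow_smul_ne k hco
          rw [hmax2, show γ + Finsupp.single t 1 - Finsupp.single j 1 - Finsupp.single i 1
            = β + Finsupp.single t 1 from fs_c3exp β i j t] at hco
          obtain ⟨hb', he', hβ'⟩ := coeff_smul_sym_ne G k hco
          subst he'; subst hβ'
          exact hgood2 hb'
      · rw [cMono_c1_branch1 G k hbe hτ hc hC1 hmax
          (Finset.not_nonempty_iff_eq_empty.1 hC3)] at hco
        rw [show γ - Finsupp.single j 1 = β + Finsupp.single i 1
          from fs_addsub2 β i j] at hco
        obtain ⟨hb', he', hβ'⟩ := coeff_smul_sym_ne G k hco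
        subst he'; subst hβ'
        exact hgood1 hb'
    · rw [cMono_c1_card2 G k hbe hτ hc hC1 hmax] at hco
      rw [show γ - Finsupp.single j 1 = β + Finsupp.single i 1
        from fs_addsub2 β i j] at hco
      obtain ⟨hb', he', hβ'⟩ := coeff_smul_sym_ne G k hco
      subst he'; subst hβ'
      exact hgood1 hb'

theorem basis_pair {i j : Fin n} (hij : i < j) (hadj : G.Adj i j) :
    IsBasisCell G (({i}, {j}) : Cell n) := by
  refine Or.inr ⟨⟨i, Finset.mem_singleton_self i⟩, ⟨j, Finset.mem_singleton_self j⟩,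
    Finset.disjoint_singleton.2 (ne_of_lt hij), ?_, ?_⟩
  · intro s hs u hu
    rw [Finset.mem_singleton] at hs hu
    rw [hs, hu]; exact hij
  · intro s hs u hu _
    rw [Finset.mem_singleton] at hs hu
    rw [hs, hu]; exact hadj

theorem step_base {i j : Fin n} (hij : i < j) (hadj : G.Adj i j) :
    cMono G k ((∅, ∅) : Cell n) (Finsupp.single i 1 + Finsupp.single j 1)
      = Finsupp.single (({i}, {j}) : Cell n) 1 := by
  rw [cMono_empty]
  set α := Finsupp.single i 1 + Finsupp.single j 1 with hα
  have hval : ∀ l, 1 ≤ α l ↔ (i = l ∨ j = l) := by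
    intro l
    rw [hα, Finsupp.add_apply, Finsupp.single_apply, Finsupp.single_apply]
    split_ifs with h1 h2 h2
    · exact iff_of_true (by norm_num) (Or.inl h1)
    · exact iff_of_true (by norm_num) (Or.inl h1)
    · exact iff_of_true (by norm_num) (Or.inr h2)
    · exact iff_of_false (by norm_num) (by tauto)
  have hDvd : DvdSet G α = {((i, j) : Fin n × Fin n)} := by
    ext p
    unfold DvdSet
    rw [Finset.mem_filter, Finset.mem_singleton]
    constructor
    · rintro ⟨-, hlt, hadj', h1, h2⟩
      rcases (hval p.1).1 h1 with h | h <;> rcases (hval p.2).1 h2 with h' | h'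
      · exact absurd hlt (by rw [← h, ← h']; exact lt_irrefl i)
      · exact (Prod.ext_iff).2 ⟨h.symm, h'.symm⟩
      · exact absurd hlt (by rw [← h, ← h']; exact not_lt.2 (le_of_lt hij))
      · exact absurd hlt (by rw [← h, ← h']; exact lt_irrefl j)
    · rintro rfl
      exact ⟨Finset.mem_univ _, hij, hadj, (hval i).2 (Or.inl rfl), (hval j).2 (Or.inr rfl)⟩
  have hne : (DvdSet G α).Nonempty := by
    rw [hDvd]; exact ⟨_, Finset.mem_singleton_self _⟩
  unfold cZero
  rw [dif_pos hne]
  have hjimg : j ∈ (DvdSet G α).image Prod.snd := by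
    rw [hDvd, Finset.image_singleton]; exact Finset.mem_singleton_self _
  have htval : ((DvdSet G α).image Prod.snd).max' (hne.image Prod.snd) = j := by
    refine le_antisymm (Finset.max'_le _ _ _ fun x hx => ?_) (Finset.le_max' _ _ hjimg)
    obtain ⟨p, hp, rfl⟩ := Finset.mem_image.1 hx
    rw [hDvd, Finset.mem_singleton] at hp
    rw [hp]
  rw [htval]
  have hfil : (DvdSet G α).filter (fun p => p.2 = j) = {((i, j) : Fin n × Fin n)} := by
    ext p
    rw [Finset.mem_filter, hDvd, Finset.mem_singleton]
    constructor
    · rintro ⟨h, -⟩; exact h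
    · rintro rfl; exact ⟨rfl, rfl⟩
  have h2 : (((DvdSet G α).filter fun p => p.2 = j).image Prod.fst).Nonempty := by
    rw [hfil, Finset.image_singleton]
    exact ⟨i, Finset.mem_singleton_self _⟩
  rw [dif_pos h2]
  have hsval : (((DvdSet G α).filter fun p => p.2 = j).image Prod.fst).min' h2 = i := by
    have : (((DvdSet G α).filter fun p => p.2 = j).image Prod.fst) = {i} := by
      rw [hfil, Finset.image_singleton]
    refine le_antisymm (Finset.min'_le _ _ (by rw [this]; exact Finset.mem_singleton_self _))
      (Finset.le_min' _ _ _ fun x hx => by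
        rw [this, Finset.mem_singleton] at hx; exact le_of_eq hx.symm)
  rw [hsval]
  have hzero : α - Finsupp.single i 1 - Finsupp.single j 1 = 0 := by
    ext l; rw [hα]; simp only [Finsupp.tsub_apply, Finsupp.add_apply, Finsupp.coe_zero,
      Pi.zero_apply]; omega
  show (MvPolynomial.monomial (α - Finsupp.single i 1 - Finsupp.single j 1) (1 : k)) •
      sym G k (({i}, {j}) : Cell n) = Finsupp.single (({i}, {j}) : Cell n) 1
  rw [hzero, MvPolynomial.monomial_zero', map_one, one_smul,
    sym_of_basis G k (basis_pair G hij hadj)]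

theorem bstar_base (N : ℕ) :
    bstar G k N ((∅, ∅) : Cell n) ((∅, ∅) : Cell n) = 0 ∨
    bstar G k N ((∅, ∅) : Cell n) ((∅, ∅) : Cell n)
      = Finsupp.single ((∅, ∅) : Cell n) 1 := by
  cases N with
  | zero => exact Or.inl rfl
  | succ N =>
    right
    rw [show bstar G k (N + 1) ((∅, ∅) : Cell n) ((∅, ∅) : Cell n)
      = if cellDeg ((∅, ∅) : Cell n) + cellDeg ((∅, ∅) : Cell n) = 0
        then Finsupp.single ((∅, ∅) : Cell n) 1 else
        Cmap G k (biext k (fun a b => bstar G k N a b)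
          (Dmap G k (Finsupp.single ((∅, ∅) : Cell n) 1)) (Finsupp.single ((∅, ∅) : Cell n) 1))
        + ((-1 : MvPolynomial (Fin n) k) ^ cellDeg ((∅, ∅) : Cell n)) •
            Cmap G k (biext k (fun a b => bstar G k N a b) (Finsupp.single ((∅, ∅) : Cell n) 1)
              (Dmap G k (Finsupp.single ((∅, ∅) : Cell n) 1))) from rfl]
    rw [if_pos (show cellDeg ((∅, ∅) : Cell n) + cellDeg ((∅, ∅) : Cell n) = 0 from rfl)]

/-! ### Coefficient extraction through monomial multiplication -/

theorem coeff_pow_mul_X_smul {w : Ftot n k} {e : Cell n} {α : Fin n →₀ ℕ}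
    {p : ℕ} {j : Fin n}
    (h : MvPolynomial.coeff α
      ((((-1 : MvPolynomial (Fin n) k) ^ p * X j) • w) e) ≠ 0) :
    ∃ β, α = β + Finsupp.single j 1 ∧ MvPolynomial.coeff β (w e) ≠ 0 := by
  rw [Finsupp.smul_apply, smul_eq_mul, mul_assoc,
    show ((-1 : MvPolynomial (Fin n) k) ^ p) = MvPolynomial.C ((-1 : k) ^ p) by
      rw [map_pow, map_neg, map_one],
    MvPolynomial.coeff_C_mul] at h
  have h2 : MvPolynomial.coeff α (X j * w e) ≠ 0 := fun h0 => h (by rw [h0, mul_zero])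
  rw [MvPolynomial.coeff_X_mul'] at h2
  by_cases hj : j ∈ α.support
  · rw [if_pos hj] at h2
    exact ⟨α - Finsupp.single j 1, (fs_subadd hj).symm, h2⟩
  · rw [if_neg hj] at h2
    exact absurd rfl h2

theorem coeff_XX_smul {w : Ftot n k} {e : Cell n} {α : Fin n →₀ ℕ} {i j : Fin n}
    (hne : i ≠ j)
    (h : MvPolynomial.coeff α (((X i * X j : MvPolynomial (Fin n) k) • w) e) ≠ 0) :
    ∃ β, α = β + Finsupp.single i 1 + Finsupp.single j 1 ∧
      MvPolynomial.coeff β (w e) ≠ 0 := by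
  rw [Finsupp.smul_apply, smul_eq_mul, mul_assoc] at h
  rw [MvPolynomial.coeff_X_mul'] at h
  by_cases hi : i ∈ α.support
  · rw [if_pos hi] at h
    rw [MvPolynomial.coeff_X_mul'] at h
    by_cases hj : j ∈ (α - Finsupp.single i 1).support
    · rw [if_pos hj] at h
      refine ⟨α - Finsupp.single i 1 - Finsupp.single j 1, ?_, h⟩
      rw [add_right_comm, fs_subadd hj, fs_subadd hi]
    · rw [if_neg hj] at h
      exact absurd rfl h
  · rw [if_neg hi] at h
    exact absurd rfl h

/-! ### `diffCell` structure -/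

theorem diffCell_empty : diffCell G k ((∅, ∅) : Cell n) = 0 := by
  unfold diffCell
  rw [if_pos (basis_empty G)]
  norm_num

theorem diffCell_two {e : Cell n} (hb : IsBasisCell G e)
    (h2 : e.1.card + e.2.card = 2) :
    diffCell G k e = (∏ i ∈ e.1 ∪ e.2, (X i : MvPolynomial (Fin n) k)) •
      sym G k ((∅, ∅) : Cell n) := by
  unfold diffCell
  rw [if_pos hb, if_pos h2]

theorem diffCell_big {e : Cell n} (hb : IsBasisCell G e)
    (h2 : ¬ e.1.card + e.2.card = 2) (h3 : 3 ≤ e.1.card + e.2.card) :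
    diffCell G k e =
      (∑ i ∈ e.1,
        (((-1 : MvPolynomial (Fin n) k) ^ (e.2.card + (e.1.filter fun j => i < j).card)) * X i) •
          sym G k (e.1.erase i, e.2))
      + (∑ i ∈ e.2,
        (((-1 : MvPolynomial (Fin n) k) ^ ((e.2.filter fun j => i < j).card)) * X i) •
          sym G k (e.1, e.2.erase i)) := by
  unfold diffCell
  rw [if_pos hb, if_neg h2, if_pos h3]

theorem basis_two {e : Cell n} (hb : IsBasisCell G e)
    (h2 : e.1.card + e.2.card = 2) :
    ∃ i j : Fin n, i < j ∧ G.Adj i j ∧ e = (({i}, {j}) : Cell n) := by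
  have hne : e ≠ ((∅, ∅) : Cell n) := by
    intro h
    rw [h] at h2
    simp at h2
  obtain ⟨hσ, hτ⟩ := basis_nonempty (G := G) hb hne
  have c1 := Finset.card_pos.2 hσ
  have c2 := Finset.card_pos.2 hτ
  have hc1 : e.1.card = 1 := by omega
  have hc2 : e.2.card = 1 := by omega
  obtain ⟨i, hi⟩ := Finset.card_eq_one.1 hc1
  obtain ⟨j, hj⟩ := Finset.card_eq_one.1 hc2
  have him : i ∈ e.1 := by rw [hi]; exact Finset.mem_singleton_self i
  have hjm : j ∈ e.2 := by rw [hj]; exact Finset.mem_singleton_self j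
  refine ⟨i, j, basis_lt G hb him hjm, ?_, Prod.ext hi hj⟩
  rcases hb with h | h
  · exact absurd h hne
  · exact h.2.2.2.2 i him j hjm (fun j' hj' => by
      rw [hj, Finset.mem_singleton] at hj'
      rw [hj'])

/-- The heart of the induction: applying `Cmap` to `d(cPar) ⋆`-style sums preserves
goodness. -/
theorem core (hAM : AdjMono G) {cOth : Cell n} (hOth : IsBasisCell G cOth)
    (W : Cell n → Ftot n k)
    (hW : ∀ c', IsBasisCell G c' → ¬(c' = ((∅, ∅) : Cell n) ∧ cOth = (∅, ∅)) →
      GoodF G k c' cOth (W c'))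
    (hWbase : cOth = ((∅, ∅) : Cell n) →
      (W ((∅, ∅) : Cell n) = 0 ∨
        W ((∅, ∅) : Cell n) = Finsupp.single ((∅, ∅) : Cell n) 1))
    (cPar : Cell n) (hPar : IsBasisCell G cPar) :
    GoodF G k cPar cOth (Cmap G k ((diffCell G k cPar).sum fun c m => m • W c)) := by
  by_cases hPE : cPar = ((∅, ∅) : Cell n)
  · rw [hPE, diffCell_empty, Finsupp.sum_zero_index, map_zero]
    exact GoodF_zero G k
  obtain ⟨hσP, hτP⟩ := basis_nonempty (G := G) hPar hPE
  by_cases h2 : cPar.1.card + cPar.2.card = 2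
  · -- `cPar = ({i},{j})` is an edge cell
    obtain ⟨i, j, hij, hadj, hpe⟩ := basis_two G hPar h2
    subst hpe
    rw [diffCell_two G k hPar h2]
    have hprod : (∏ l ∈ (({i}, {j}) : Cell n).1 ∪ (({i}, {j}) : Cell n).2,
        (X l : MvPolynomial (Fin n) k)) = X i * X j := by
      show (∏ l ∈ ({i} : Finset (Fin n)) ∪ {j}, (X l : MvPolynomial (Fin n) k)) = _
      rw [← Finset.insert_eq, Finset.prod_pair (ne_of_lt hij)]
    rw [hprod, sym_of_basis G k (basis_empty G), Finsupp.smul_single', mul_one,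
      Finsupp.sum_single_index (h := fun c m => m • W c) (zero_smul _ _)]
    by_cases hOE : cOth = ((∅, ∅) : Cell n)
    · rcases hWbase hOE with hw | hw
      · rw [hw, smul_zero, map_zero]
        exact GoodF_zero G k
      · rw [hw, Finsupp.smul_single', mul_one,
          show (X i * X j : MvPolynomial (Fin n) k)
            = MvPolynomial.monomial (Finsupp.single i 1 + Finsupp.single j 1) 1 by
          rw [show (X i : MvPolynomial (Fin n) k)
              = MvPolynomial.monomial (Finsupp.single i 1) 1 by
            rw [← MvPolynomial.X_pow_eq_monomial, pow_one],
            show (X j : MvPolynomial (Fin n) k)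
              = MvPolynomial.monomial (Finsupp.single j 1) 1 by
            rw [← MvPolynomial.X_pow_eq_monomial, pow_one],
            MvPolynomial.monomial_mul, one_mul],
          Cmap_single_monomial, one_smul, step_base G k hij hadj]
        intro e β hc
        rw [show (1 : MvPolynomial (Fin n) k) = MvPolynomial.monomial 0 1 by
          rw [MvPolynomial.monomial_zero', map_one]] at hc
        obtain ⟨he, hβ⟩ := coeff_single_monomial_ne k hc
        subst he; subst hβ
        refine ⟨basis_pair G hij hadj, ⟨i, Finset.mem_singleton_self i⟩,
          ⟨j, Finset.mem_singleton_self j⟩, by simp, ?_, ?_, ?_⟩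
        · intro u hu
          have hu' : u ∈ ({j} : Finset (Fin n)) := hu
          rw [Finset.mem_singleton] at hu'
          exact ⟨j, Finset.mem_singleton_self j, by rw [hu']⟩
        · intro u hu
          rw [hOE] at hu
          exact absurd hu (Finset.notMem_empty u)
        · intro _
          refine ⟨by simp, ?_, ?_⟩
          · intro s' hs'
            have hs'' : s' ∈ ({i} : Finset (Fin n)) := hs'
            rw [Finset.mem_singleton] at hs''
            exact ⟨i, Finset.mem_singleton_self i, by rw [hs'']⟩
          · intro s' hs'
            rw [hOE] at hs'
            exact absurd hs' (Finset.notMem_empty s')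
    · have hgf : GoodF G k ((∅, ∅) : Cell n) cOth (W ((∅, ∅) : Cell n)) :=
        hW _ (basis_empty G) (fun hh => hOE hh.2)
      intro e' α' hc'
      refine Cmap_terms G k (P := GoodTerm G (({i}, {j}) : Cell n) cOth) ?_ e' α' hc'
      intro e α hcoef e'' α'' hc''
      obtain ⟨β, heq, hβ⟩ := coeff_XX_smul k (ne_of_lt hij) hcoef
      subst heq
      exact step_two G k hij hadj hAM (hgf e β hβ) e'' α'' hc''
  · have h3 : 3 ≤ cPar.1.card + cPar.2.card := by
      have c1 := Finset.card_pos.2 hσP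
      have c2 := Finset.card_pos.2 hτP
      omega
    rw [diffCell_big G k hPar h2 h3,
      Finsupp.sum_add_index' (h := fun c m => m • W c) (fun c => zero_smul _ _) (fun c m1 m2 => add_smul _ _ _),
      map_add]
    apply GoodF_add
    · -- the σ-removal sum
      rw [← Finsupp.sum_finset_sum_index (h := fun c m => m • W c) (fun c => zero_smul _ _)
        (fun c m1 m2 => add_smul _ _ _), map_sum]
      apply GoodF_sum
      intro i hi
      by_cases hbc : IsBasisCell G ((cPar.1.erase i, cPar.2) : Cell n)
      · rw [sym_of_basis G k hbc, Finsupp.smul_single', mul_one,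
          Finsupp.sum_single_index (h := fun c m => m • W c) (zero_smul _ _)]
        have hgf : GoodF G k ((cPar.1.erase i, cPar.2) : Cell n) cOth
            (W (cPar.1.erase i, cPar.2)) := by
          refine hW _ hbc fun hh => ?_
          have := hτP
          rw [show ((cPar.1.erase i, cPar.2) : Cell n).2 = cPar.2 from rfl] at hh
          rw [Prod.ext_iff] at hh
          obtain ⟨⟨-, hh2⟩, -⟩ := hh
          rw [hh2] at this
          exact absurd this (by simp)
        intro e' α' hc'
        refine Cmap_terms G k (P := GoodTerm G cPar cOth) ?_ e' α' hc'
        intro e α hcoef e'' α'' hc''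
        obtain ⟨β, heq, hβ⟩ := coeff_pow_mul_X_smul k hcoef
        subst heq
        exact step_sigma G k hPar hτP hi (hgf e β hβ) e'' α'' hc''
      · rw [sym_of_not_basis G k hbc, smul_zero, Finsupp.sum_zero_index, map_zero]
        exact GoodF_zero G k
    · -- the τ-removal sum
      rw [← Finsupp.sum_finset_sum_index (h := fun c m => m • W c) (fun c => zero_smul _ _)
        (fun c m1 m2 => add_smul _ _ _), map_sum]
      apply GoodF_sum
      intro i hi
      by_cases hbc : IsBasisCell G ((cPar.1, cPar.2.erase i) : Cell n)
      · rw [sym_of_basis G k hbc, Finsupp.smul_single', mul_one,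
          Finsupp.sum_single_index (h := fun c m => m • W c) (zero_smul _ _)]
        have hgf : GoodF G k ((cPar.1, cPar.2.erase i) : Cell n) cOth
            (W (cPar.1, cPar.2.erase i)) := by
          refine hW _ hbc fun hh => ?_
          have := hσP
          rw [Prod.ext_iff] at hh
          obtain ⟨⟨hh1, -⟩, -⟩ := hh
          rw [show ((cPar.1, cPar.2.erase i) : Cell n).1 = cPar.1 from rfl] at hh1
          rw [hh1] at this
          exact absurd this (by simp)
        intro e' α' hc'
        refine Cmap_terms G k (P := GoodTerm G cPar cOth) ?_ e' α' hc'
        intro e α hcoef e'' α'' hc''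
        obtain ⟨β, heq, hβ⟩ := coeff_pow_mul_X_smul k hcoef
        subst heq
        exact step_tau G k hPar hσP hi (hgf e β hβ) e'' α'' hc''
      · rw [sym_of_not_basis G k hbc, smul_zero, Finsupp.sum_zero_index, map_zero]
        exact GoodF_zero G k

theorem good_bstar (hAM : AdjMono G) (N : ℕ) :
    ∀ cA cB : Cell n, IsBasisCell G cA → IsBasisCell G cB →
      ¬(cA = ((∅, ∅) : Cell n) ∧ cB = ((∅, ∅) : Cell n)) →
      GoodF G k cA cB (bstar G k N cA cB) := by
  induction N with
  | zero =>
    intro cA cB _ _ _ e β h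
    rw [show bstar G k 0 cA cB = 0 from rfl] at h
    simp at h
  | succ N IH =>
    intro cA cB hA hB hne
    have hdeg : ¬(cellDeg cA + cellDeg cB = 0) := by
      intro h
      exact hne ⟨basis_of_deg_zero G hA (by omega), basis_of_deg_zero G hB (by omega)⟩
    rw [show bstar G k (N + 1) cA cB
      = if cellDeg cA + cellDeg cB = 0 then Finsupp.single ((∅, ∅) : Cell n) 1 else
        Cmap G k (biext k (fun a b => bstar G k N a b)
          (Dmap G k (Finsupp.single cA 1)) (Finsupp.single cB 1))
        + ((-1 : MvPolynomial (Fin n) k) ^ cellDeg cA) •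
            Cmap G k (biext k (fun a b => bstar G k N a b) (Finsupp.single cA 1)
              (Dmap G k (Finsupp.single cB 1))) from rfl]
    rw [if_neg hdeg]
    apply GoodF_add
    · rw [Dmap_single, biext_single_right]
      exact core G k hAM hB (fun c' => bstar G k N c' cB)
        (fun c' hb' hne' => IH c' cB hb' hB hne')
        (fun hOE => by rw [hOE]; exact bstar_base G k N)
        cA hA
    · apply GoodF_C_pow_smul
      rw [Dmap_single, biext_single_left]
      apply GoodF_swap
      exact core G k hAM hA (fun c' => bstar G k N cA c')
        (fun c' hb' hne' => GoodF_swap G k (IH cA c' hA hb'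
          (fun hh => hne' ⟨hh.2, hh.1⟩)))
        (fun hOE => by rw [hOE]; exact bstar_base G k N)
        cB hB

/-- `Cmap` kills `(±x_j)·(c' ⋆ d)` whenever `min σ' < j ≤ max τ'`. -/
theorem kill (hAM : AdjMono G) {c' d : Cell n} (hc' : IsBasisCell G c')
    (hd : IsBasisCell G d)
    (hne : ¬(c' = ((∅, ∅) : Cell n) ∧ d = ((∅, ∅) : Cell n))) {j : Fin n} {p : ℕ}
    (hj1 : ∃ u ∈ c'.2, j ≤ u) (hj2 : ∃ s ∈ c'.1, s < j) (N : ℕ) :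
    Cmap G k ((((-1 : MvPolynomial (Fin n) k) ^ p * X j)) • bstar G k N c' d) = 0 := by
  apply Cmap_eq_zero
  intro e α hco
  obtain ⟨β, heq, hβ⟩ := coeff_pow_mul_X_smul k hco
  subst heq
  have hg := good_bstar G k hAM N c' d hc' hd hne e β hβ
  have hj1' : ∃ u ∈ e.2, j ≤ u := by
    obtain ⟨u, hu, hle⟩ := hj1
    obtain ⟨v, hv, hle2⟩ := hg.2.2.2.2.1 u hu
    exact ⟨v, hv, le_trans hle hle2⟩
  have hj2' : e.2.card = 1 → ∃ s ∈ e.1, s < j := by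
    intro hc
    obtain ⟨s', hs', hlt⟩ := hj2
    obtain ⟨s, hs, hle⟩ := (hg.2.2.2.2.2.2 hc).2.1 s' hs'
    exact ⟨s, hs, lt_of_le_of_lt hle hlt⟩
  exact cMono_kill G k hg hj1' hj2'

theorem cigraph_mono {n : ℕ} (a b : Fin n → ℝ) (hab : ∀ i, a i ≤ b i)
    (hmono : ∀ i j : Fin n, i < j → a i ≤ a j) : AdjMono (cigraph n a b) := by
  intro i u v hadj hiu huv
  rcases eq_or_lt_of_le huv with rfl | hlt
  · exact hadj
  have hbu : b i < a u := by
    by_contra hc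
    push_neg at hc
    exact Set.not_disjoint_iff.2 ⟨a u, Set.mem_Icc.2 ⟨hmono i u hiu, hc⟩,
      Set.mem_Icc.2 ⟨le_refl _, hab u⟩⟩ hadj.2
  refine ⟨ne_of_lt (lt_trans hiu hlt), Set.disjoint_left.2 fun x hx hx2 => ?_⟩
  rw [Set.mem_Icc] at hx hx2
  have : a u ≤ a v := hmono u v hlt
  linarith [hx.2, hx2.1]

theorem partialCell_big {e : Cell n} (hb : IsBasisCell G e)
    (h2 : ¬ e.1.card + e.2.card = 2) (h3 : 3 ≤ e.1.card + e.2.card)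
    (h1' : e.1.Nonempty) (h2' : e.2.Nonempty) :
    partialCell G k e =
      (X (e.2.max' h2') : MvPolynomial (Fin n) k) • sym G k (e.1, e.2.erase (e.2.max' h2'))
      - ((-1 : MvPolynomial (Fin n) k) ^ (e.2.card + e.1.card)) •
          ((X (e.1.min' h1') : MvPolynomial (Fin n) k) •
            sym G k (e.1.erase (e.1.min' h1'), e.2)) := by
  unfold partialCell
  rw [if_pos hb, if_neg h2, if_pos h3, dif_pos h1', dif_pos h2']
theorem stmt10 (n : ℕ) (hn : 1 ≤ n) (a b : Fin n → ℝ)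
    (hab : ∀ i, a i ≤ b i) (hmono : ∀ i j : Fin n, i < j → a i ≤ a j)
    (k : Type) [Field k]
    (p q : ℕ) (hp : 1 ≤ p) (hq : 1 ≤ q) (e₁ e₂ : Cell n)
    (h1 : InB (cigraph n a b) p e₁) (h2 : InB (cigraph n a b) q e₂) :
    Cmap (cigraph n a b) k (pstar (cigraph n a b) k (Dmap (cigraph n a b) k (Finsupp.single e₁ 1)) (Finsupp.single e₂ 1)) =
      Cmap (cigraph n a b) k (pstar (cigraph n a b) k (Pmap (cigraph n a b) k (Finsupp.single e₁ 1)) (Finsupp.single e₂ 1)) := by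
  classical
  obtain ⟨hb1, hd1⟩ := h1
  obtain ⟨hb2, hd2⟩ := h2
  have hAM : AdjMono (cigraph n a b) := cigraph_mono a b hab hmono
  unfold pstar
  rw [Dmap_single, Pmap_single, biext_single_right, biext_single_right]
  by_cases h2c : e₁.1.card + e₁.2.card = 2
  · rw [show diffCell (cigraph n a b) k e₁ = partialCell (cigraph n a b) k e₁ by
      unfold diffCell partialCell
      rw [if_pos hb1, if_pos hb1, if_pos h2c, if_pos h2c]]
  · -- main case
    have hne1 : e₁ ≠ ((∅, ∅) : Cell n) := by
      intro h
      rw [h] at hd1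
      simp [cellDeg] at hd1
      omega
    obtain ⟨hσ1, hτ1⟩ := basis_nonempty (cigraph n a b) hb1 hne1
    have hc1pos : 1 ≤ e₁.1.card := Finset.card_pos.2 hσ1
    have hc2pos : 1 ≤ e₁.2.card := Finset.card_pos.2 hτ1
    have h3c : 3 ≤ e₁.1.card + e₁.2.card := by omega
    set i₀ := e₁.1.min' hσ1 with hi₀
    set j₀ := e₁.2.max' hτ1 with hj₀
    have hi₀mem : i₀ ∈ e₁.1 := Finset.min'_mem _ hσ1
    have hj₀mem : j₀ ∈ e₁.2 := Finset.max'_mem _ hτ1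
    have hfilA : (e₁.1.filter fun l => i₀ < l) = e₁.1.erase i₀ := by
      ext l
      rw [Finset.mem_filter, Finset.mem_erase]
      constructor
      · rintro ⟨hl, hlt⟩
        exact ⟨ne_of_gt hlt, hl⟩
      · rintro ⟨hne, hl⟩
        exact ⟨hl, lt_of_le_of_ne (Finset.min'_le _ _ hl) (Ne.symm hne)⟩
    have hcardA : (e₁.1.erase i₀).card = e₁.1.card - 1 :=
      Finset.card_erase_of_mem hi₀mem
    have hfilB : (e₁.2.filter fun l => j₀ < l) = ∅ := by
      rw [Finset.filter_eq_empty_iff]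
      exact fun l hl => not_lt.2 (Finset.le_max' _ _ hl)
    have hsum : ∀ f g : Ftot n k,
        (f + g).sum (fun c m => m • bstar (cigraph n a b) k (4 * n + 4) c e₂)
          = f.sum (fun c m => m • bstar (cigraph n a b) k (4 * n + 4) c e₂)
          + g.sum (fun c m => m • bstar (cigraph n a b) k (4 * n + 4) c e₂) :=
      fun f g => Finsupp.sum_add_index'
        (h := fun c m => m • bstar (cigraph n a b) k (4 * n + 4) c e₂)
        (fun c => zero_smul _ _) (fun c m1 m2 => add_smul _ _ _)
    have hP : partialCell (cigraph n a b) k e₁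
        = (((-1 : MvPolynomial (Fin n) k) ^ ((e₁.2.filter fun l => j₀ < l).card)) * X j₀) •
            sym (cigraph n a b) k (e₁.1, e₁.2.erase j₀)
          + (((-1 : MvPolynomial (Fin n) k) ^
              (e₁.2.card + (e₁.1.filter fun l => i₀ < l).card)) * X i₀) •
            sym (cigraph n a b) k (e₁.1.erase i₀, e₁.2) := by
      rw [partialCell_big (cigraph n a b) k hb1 h2c h3c hσ1 hτ1, hfilB, hfilA, hcardA,
        Finset.card_empty, pow_zero, one_mul, ← hi₀, ← hj₀,
        show e₁.2.card + e₁.1.card = (e₁.2.card + (e₁.1.card - 1)) + 1 by omega,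
        pow_succ]
      module
    have hsplitA : (∑ i ∈ e₁.1,
          (((-1 : MvPolynomial (Fin n) k) ^
            (e₁.2.card + (e₁.1.filter fun j => i < j).card)) * X i) •
            sym (cigraph n a b) k (e₁.1.erase i, e₁.2))
        = (((-1 : MvPolynomial (Fin n) k) ^
            (e₁.2.card + (e₁.1.filter fun j => i₀ < j).card)) * X i₀) •
            sym (cigraph n a b) k (e₁.1.erase i₀, e₁.2)
          + ∑ i ∈ e₁.1.erase i₀,
            (((-1 : MvPolynomial (Fin n) k) ^
              (e₁.2.card + (e₁.1.filter fun j => i < j).card)) * X i) •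
              sym (cigraph n a b) k (e₁.1.erase i, e₁.2) :=
      (Finset.add_sum_erase _ _ hi₀mem).symm
    have hsplitB : (∑ i ∈ e₁.2,
          (((-1 : MvPolynomial (Fin n) k) ^ ((e₁.2.filter fun j => i < j).card)) * X i) •
            sym (cigraph n a b) k (e₁.1, e₁.2.erase i))
        = (((-1 : MvPolynomial (Fin n) k) ^ ((e₁.2.filter fun j => j₀ < j).card)) * X j₀) •
            sym (cigraph n a b) k (e₁.1, e₁.2.erase j₀)
          + ∑ i ∈ e₁.2.erase j₀,
            (((-1 : MvPolynomial (Fin n) k) ^ ((e₁.2.filter fun j => i < j).card)) * X i) •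
              sym (cigraph n a b) k (e₁.1, e₁.2.erase i) :=
      (Finset.add_sum_erase _ _ hj₀mem).symm
    rw [diffCell_big (cigraph n a b) k hb1 h2c h3c, hsplitA, hsplitB, hP]
    rw [hsum, hsum, hsum, hsum]
    simp only [map_add]
    have hzA : Cmap (cigraph n a b) k ((∑ i ∈ e₁.1.erase i₀,
        (((-1 : MvPolynomial (Fin n) k) ^
          (e₁.2.card + (e₁.1.filter fun j => i < j).card)) * X i) •
          sym (cigraph n a b) k (e₁.1.erase i, e₁.2)).sum
        (fun c m => m • bstar (cigraph n a b) k (4 * n + 4) c e₂)) = 0 := by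
      rw [← Finsupp.sum_finset_sum_index
        (h := fun c m => m • bstar (cigraph n a b) k (4 * n + 4) c e₂)
        (fun c => zero_smul _ _) (fun c m1 m2 => add_smul _ _ _), map_sum]
      apply Finset.sum_eq_zero
      intro i hi
      obtain ⟨hine, himem⟩ := Finset.mem_erase.1 hi
      by_cases hbc : IsBasisCell (cigraph n a b) ((e₁.1.erase i, e₁.2) : Cell n)
      · rw [sym_of_basis _ k hbc, Finsupp.smul_single', mul_one,
          Finsupp.sum_single_index
            (h := fun c m => m • bstar (cigraph n a b) k (4 * n + 4) c e₂)
            (zero_smul _ _)]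
        refine kill (cigraph n a b) k hAM hbc hb2 ?_ ?_ ?_ _
        · intro hh
          rw [Prod.ext_iff] at hh
          have := hτ1
          rw [show ((e₁.1.erase i, e₁.2) : Cell n).2 = e₁.2 from rfl] at hh
          rw [hh.1.2] at this
          exact absurd this (by simp)
        · obtain ⟨u, hu⟩ := hτ1
          exact ⟨u, hu, le_of_lt (basis_lt _ hb1 himem hu)⟩
        · exact ⟨i₀, Finset.mem_erase.2 ⟨fun hh => hine hh.symm, hi₀mem⟩,
            lt_of_le_of_ne (Finset.min'_le _ _ himem) (fun hh => hine hh.symm)⟩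
      · rw [sym_of_not_basis _ k hbc, smul_zero, Finsupp.sum_zero_index, map_zero]
    have hzB : Cmap (cigraph n a b) k ((∑ i ∈ e₁.2.erase j₀,
        (((-1 : MvPolynomial (Fin n) k) ^ ((e₁.2.filter fun j => i < j).card)) * X i) •
          sym (cigraph n a b) k (e₁.1, e₁.2.erase i)).sum
        (fun c m => m • bstar (cigraph n a b) k (4 * n + 4) c e₂)) = 0 := by
      rw [← Finsupp.sum_finset_sum_index
        (h := fun c m => m • bstar (cigraph n a b) k (4 * n + 4) c e₂)
        (fun c => zero_smul _ _) (fun c m1 m2 => add_smul _ _ _), map_sum]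
      apply Finset.sum_eq_zero
      intro i hi
      obtain ⟨hine, himem⟩ := Finset.mem_erase.1 hi
      by_cases hbc : IsBasisCell (cigraph n a b) ((e₁.1, e₁.2.erase i) : Cell n)
      · rw [sym_of_basis _ k hbc, Finsupp.smul_single', mul_one,
          Finsupp.sum_single_index
            (h := fun c m => m • bstar (cigraph n a b) k (4 * n + 4) c e₂)
            (zero_smul _ _)]
        have hcoerce : ((-1 : MvPolynomial (Fin n) k) ^ ((e₁.2.filter fun j => i < j).card))
            = ((-1 : MvPolynomial (Fin n) k) ^ ((e₁.2.filter fun j => i < j).card)) := rfl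
        refine kill (cigraph n a b) k hAM hbc hb2 ?_ ?_ ?_ _
        · intro hh
          rw [Prod.ext_iff] at hh
          have := hσ1
          rw [show ((e₁.1, e₁.2.erase i) : Cell n).1 = e₁.1 from rfl] at hh
          rw [hh.1.1] at this
          exact absurd this (by simp)
        · exact ⟨j₀, Finset.mem_erase.2 ⟨fun hh => hine hh.symm, hj₀mem⟩,
            le_of_lt (lt_of_le_of_ne (Finset.le_max' _ _ himem) (fun hh => hine hh))⟩
        · obtain ⟨s, hs⟩ := hσ1
          exact ⟨s, hs, basis_lt _ hb1 hs himem⟩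
      · rw [sym_of_not_basis _ k hbc, smul_zero, Finsupp.sum_zero_index, map_zero]
    rw [hzA, hzB, add_zero, add_zero]
    abel

end EdgeRes
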